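/- Let p, q be coprime positive integers (or p = 0, q = 1), set λ₁/λ₂ = −p/q, u := x^q y^p, and X := X₀ + R·y^ε W₀ a formal vector field where W₀ = λ₁x∂x + λ₂y∂y, X₀ = u^k x∂x + (1+μu^k)W₀, ε ∈ {−1,0,1}. For G ∈ ℂ[[x,y]] there exists F ∈ ℂ[[x,y]] with X·F + ελ₂(1+μu^k)F = G if and only if G contains no monomial of the form y^{−ε}uⁿ for 0 ≤ n ≤ k (equivalently, the coefficients g_{a,b} vanish for (a, b+ε) = l(q,p) with 0 ≤ l ≤ k). If ε ≤ 0 the coefficient of y^{−ε} in F is free and F is unique up to this choice. -/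

import Mathlib

/- Statement 19 (Lemma res-sad-eq-h-form): p, q coprime positive integers (or p = 0,
q = 1), λ₁/λ₂ = −p/q, u := x^q y^p, W₀ = λ₁x∂x + λ₂y∂y, X₀ = u^k x∂x + (1+μu^k)W₀,
X = X₀ + R·y^ε W₀ with ε ∈ {−1,0,1} (R divisible by u^{k+1}; when ε = −1 one is in the
saddle-node case p = 0, λ₁ = 0, so that y^{−1}W₀ = λ₂∂y).  For G ∈ ℂ[[x,y]] there is an
F ∈ ℂ[[x,y]] with X·F + ελ₂(1+μu^k)F = G iff G contains no monomial y^{−ε}uⁿ with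
0 ≤ n ≤ k (i.e. g_{a,b} = 0 whenever (a, b+ε) = l(q,p) with 0 ≤ l ≤ k).  If ε ≤ 0 the
coefficient of y^{−ε} in F is free and F is unique up to this choice. -/

noncomputable section
open MvPowerSeries

abbrev R2 := MvPowerSeries (Fin 2) ℂ

def pd (i : Fin 2) (f : R2) : R2 :=
  fun d => ((d i : ℂ) + 1) * MvPowerSeries.coeff (R := ℂ) (d + Finsupp.single i 1) f

/-- the resonant monomial u = x^q y^p -/
def uMon (p q : ℕ) : R2 := MvPowerSeries.X 0 ^ q * MvPowerSeries.X 1 ^ p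

/-- W₀·f for W₀ = λ₁x∂x + λ₂y∂y -/
def W0D (lam₁ lam₂ : ℂ) (f : R2) : R2 :=
  MvPowerSeries.C (σ := Fin 2) (R := ℂ) lam₁ * MvPowerSeries.X 0 * pd 0 f +
    MvPowerSeries.C (σ := Fin 2) (R := ℂ) lam₂ * MvPowerSeries.X 1 * pd 1 f

/-- X₀·f for X₀ = u^k x∂x + (1+μu^k)W₀ -/
def X0D (lam₁ lam₂ μ : ℂ) (p q k : ℕ) (f : R2) : R2 :=
  uMon p q ^ k * MvPowerSeries.X 0 * pd 0 f +
    (1 + MvPowerSeries.C (σ := Fin 2) (R := ℂ) μ * uMon p q ^ k) * W0D lam₁ lam₂ f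

/-- (y^ε W₀)·f for ε ∈ {−1,0,1}; in the case ε = −1 (where p = 0, λ₁ = 0) one has
y^{−1}W₀ = λ₂∂y. -/
def YepsD (lam₁ lam₂ : ℂ) (ε : ℤ) (f : R2) : R2 :=
  if ε = -1 then MvPowerSeries.C (σ := Fin 2) (R := ℂ) lam₂ * pd 1 f
  else MvPowerSeries.C (σ := Fin 2) (R := ℂ) lam₁ * MvPowerSeries.X 0 *
        MvPowerSeries.X 1 ^ ε.toNat * pd 0 f +
      MvPowerSeries.C (σ := Fin 2) (R := ℂ) lam₂ * MvPowerSeries.X 1 ^ (ε.toNat + 1) * pd 1 f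

namespace St19

lemma coeff_pd (i : Fin 2) (f : R2) (d : Fin 2 →₀ ℕ) :
    MvPowerSeries.coeff (R := ℂ) d (pd i f) = ((d i : ℂ) + 1) * MvPowerSeries.coeff (R := ℂ) (d + Finsupp.single i 1) f := rfl

lemma fin2_eq (d : Fin 2 →₀ ℕ) : d = Finsupp.single 0 (d 0) + Finsupp.single 1 (d 1) := by
  ext i
  fin_cases i <;> simp

lemma C_eq (a : ℂ) : MvPowerSeries.C (σ := Fin 2) (R := ℂ) a = monomial (R := ℂ) 0 a := rfl

lemma C_mul_mono (a : ℂ) (m : Fin 2 →₀ ℕ) (b : ℂ) :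
    MvPowerSeries.C (σ := Fin 2) (R := ℂ) a * monomial (R := ℂ) m b = monomial (R := ℂ) m (a * b) := by
  rw [C_eq, monomial_mul_monomial, zero_add]

lemma uMon_pow (p q k : ℕ) :
    uMon p q ^ k = monomial (R := ℂ) (Finsupp.single 0 (k*q) + Finsupp.single 1 (k*p)) 1 := by
  rw [uMon, mul_pow, ← pow_mul, ← pow_mul, X_pow_eq, X_pow_eq, monomial_mul_monomial,
    one_mul, mul_comm q k, mul_comm p k]

/-- master helper: coefficient of `monomial m a * pd i f` -/
lemma coeff_mono_pd (m : Fin 2 →₀ ℕ) (i : Fin 2) (a : ℂ) (f : R2) (d : Fin 2 →₀ ℕ) :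
    MvPowerSeries.coeff (R := ℂ) d (monomial (R := ℂ) m a * pd i f) =
      if m ≤ d then a * (((d - m) i : ℂ) + 1) * MvPowerSeries.coeff (R := ℂ) (d - m + Finsupp.single i 1) f
      else 0 := by
  rw [coeff_monomial_mul]
  split <;> [rw [coeff_pd]; rfl]
  ring

lemma coeff_single_pd (i : Fin 2) (a : ℂ) (f : R2) (d : Fin 2 →₀ ℕ) :
    MvPowerSeries.coeff (R := ℂ) d (monomial (R := ℂ) (Finsupp.single i 1) a * pd i f) =
      a * (d i : ℂ) * MvPowerSeries.coeff (R := ℂ) d f := by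
  rw [coeff_mono_pd]
  by_cases h : Finsupp.single i 1 ≤ d
  · rw [if_pos h]
    have hd : 1 ≤ d i := Finsupp.single_le_iff.mp h
    have h1 : d - Finsupp.single i 1 + Finsupp.single i 1 = d := tsub_add_cancel_of_le h
    have h2 : (d - Finsupp.single i 1 : Fin 2 →₀ ℕ) i = d i - 1 := by
      rw [Finsupp.tsub_apply, Finsupp.single_eq_same]
    rw [h1, h2, Nat.cast_sub hd]
    push_cast
    ring
  · rw [if_neg h]
    rw [Finsupp.single_le_iff] at h
    have : d i = 0 := by omega
    simp [this]

lemma coeff_W0D (lam₁ lam₂ : ℂ) (f : R2) (d : Fin 2 →₀ ℕ) :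
    MvPowerSeries.coeff (R := ℂ) d (W0D lam₁ lam₂ f) =
      (lam₁ * (d 0 : ℂ) + lam₂ * (d 1 : ℂ)) * MvPowerSeries.coeff (R := ℂ) d f := by
  have h0 : MvPowerSeries.C (σ := Fin 2) (R := ℂ) lam₁ * MvPowerSeries.X 0 = monomial (R := ℂ) (Finsupp.single 0 1) lam₁ := by
    rw [X_def, C_mul_mono, mul_one]
  have h1 : MvPowerSeries.C (σ := Fin 2) (R := ℂ) lam₂ * MvPowerSeries.X 1 = monomial (R := ℂ) (Finsupp.single 1 1) lam₂ := by
    rw [X_def, C_mul_mono, mul_one]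
  rw [W0D, map_add, h0, h1, coeff_single_pd, coeff_single_pd]
  ring

end St19

namespace St19

/-- `D a b` = the exponent `x^a y^b`. -/
def D (a b : ℕ) : Fin 2 →₀ ℕ := Finsupp.single 0 a + Finsupp.single 1 b

@[simp] lemma D_apply0 (a b : ℕ) : D a b 0 = a := by simp [D]
@[simp] lemma D_apply1 (a b : ℕ) : D a b 1 = b := by simp [D]

lemma D_ext (a b a' b' : ℕ) (h0 : a = a') (h1 : b = b') : D a b = D a' b' := by rw [h0, h1]

lemma D_add (a b a' b' : ℕ) : D a b + D a' b' = D (a+a') (b+b') := by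
  ext i; fin_cases i <;> simp [D]

lemma D_sub (a b a' b' : ℕ) : D a b - D a' b' = D (a-a') (b-b') := by
  ext i; fin_cases i <;> simp [D, Finsupp.tsub_apply]

lemma D_le_iff (a b a' b' : ℕ) : D a' b' ≤ D a b ↔ a' ≤ a ∧ b' ≤ b := by
  rw [Finsupp.le_def]
  constructor
  · intro h; exact ⟨by simpa using h 0, by simpa using h 1⟩
  · rintro ⟨h1, h2⟩ i; fin_cases i <;> simpa

lemma single1_eq_D (t : ℕ) : Finsupp.single (1 : Fin 2) t = D 0 t := by simp [D]
lemma single0_eq_D (t : ℕ) : Finsupp.single (0 : Fin 2) t = D t 0 := by simp [D]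

lemma fin2_eq_D (d : Fin 2 →₀ ℕ) : d = D (d 0) (d 1) := fin2_eq d

section Main

variable (p q k : ℕ) (lam₁ lam₂ μ : ℂ) (ε : ℤ) (R : R2)

def LOp (F : R2) : R2 :=
  X0D lam₁ lam₂ μ p q k F + R * YepsD lam₁ lam₂ ε F +
    MvPowerSeries.C (σ := Fin 2) (R := ℂ) ((ε : ℂ) * lam₂) *
      ((1 + MvPowerSeries.C (σ := Fin 2) (R := ℂ) μ * uMon p q ^ k) * F)

def cN (a b : ℕ) : ℂ := lam₁ * a + lam₂ * b + (ε : ℂ) * lam₂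

def csN (a b : ℕ) : ℂ :=
  ((a - k*q : ℕ) : ℂ) +
    μ * (lam₁ * ((a - k*q : ℕ) : ℂ) + lam₂ * ((b - k*p : ℕ) : ℂ) + (ε : ℂ) * lam₂)

lemma uMonk_eq : uMon p q ^ k = monomial (R := ℂ) (D (k*q) (k*p)) 1 := uMon_pow p q k

lemma coeff_termA (F : R2) (a b : ℕ) :
    MvPowerSeries.coeff (R := ℂ) (D a b) (uMon p q ^ k * MvPowerSeries.X 0 * pd 0 F) =
      if k*q ≤ a ∧ k*p ≤ b then ((a - k*q : ℕ) : ℂ) * MvPowerSeries.coeff (R := ℂ) (D (a-k*q) (b-k*p)) F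
      else 0 := by
  have e1 : uMon p q ^ k * MvPowerSeries.X 0 = monomial (R := ℂ) (D (k*q+1) (k*p)) 1 := by
    rw [uMonk_eq, X_def, monomial_mul_monomial, mul_one, single0_eq_D, D_add, add_zero]
  rw [e1, coeff_mono_pd]
  simp only [D_le_iff]
  by_cases h : k*q + 1 ≤ a ∧ k*p ≤ b
  · rw [if_pos h, if_pos ⟨by omega, h.2⟩, D_sub]
    have h2 : D (a - (k*q+1)) (b - k*p) + Finsupp.single 0 1 = D (a - k*q) (b - k*p) := by
      rw [single0_eq_D, D_add]
      exact D_ext _ _ _ _ (by omega) (by omega)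
    have h3 : ((a - (k*q+1) : ℕ) : ℂ) + 1 = ((a - k*q : ℕ) : ℂ) := by
      have : (a - (k*q+1) : ℕ) + 1 = a - k*q := by omega
      exact_mod_cast congrArg (fun n : ℕ => (n : ℂ)) this
    rw [h2, D_apply0, h3, one_mul]
  · rw [if_neg h]
    by_cases h' : k*q ≤ a ∧ k*p ≤ b
    · rw [if_pos h']
      have : a - k*q = 0 := by omega
      rw [this]
      simp
    · rw [if_neg h']

lemma coeff_LOp (F : R2) (a b : ℕ) :
    MvPowerSeries.coeff (R := ℂ) (D a b) (LOp p q k lam₁ lam₂ μ ε R F) =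
      cN lam₁ lam₂ ε a b * MvPowerSeries.coeff (R := ℂ) (D a b) F +
      (if k*q ≤ a ∧ k*p ≤ b then
        csN p q k lam₁ lam₂ μ ε a b * MvPowerSeries.coeff (R := ℂ) (D (a-k*q) (b-k*p)) F
      else 0) +
      MvPowerSeries.coeff (R := ℂ) (D a b) (R * YepsD lam₁ lam₂ ε F) := by
  rw [LOp, X0D, map_add, map_add, map_add, coeff_termA]
  have eW : (1 + MvPowerSeries.C (σ := Fin 2) (R := ℂ) μ * uMon p q ^ k) * W0D lam₁ lam₂ F =
      W0D lam₁ lam₂ F + monomial (R := ℂ) (D (k*q) (k*p)) μ * W0D lam₁ lam₂ F := by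
    rw [add_mul, one_mul, uMonk_eq, C_mul_mono, mul_one]
  have eF : MvPowerSeries.C (σ := Fin 2) (R := ℂ) ((ε : ℂ) * lam₂) *
      ((1 + MvPowerSeries.C (σ := Fin 2) (R := ℂ) μ * uMon p q ^ k) * F) =
      MvPowerSeries.C (σ := Fin 2) (R := ℂ) ((ε : ℂ) * lam₂) * F +
        monomial (R := ℂ) (D (k*q) (k*p)) ((ε : ℂ) * lam₂ * μ) * F := by
    rw [add_mul, one_mul, mul_add, uMonk_eq, C_mul_mono, mul_one, ← mul_assoc, C_mul_mono]
  rw [eW, eF, map_add, map_add, coeff_W0D, coeff_monomial_mul, coeff_C_mul,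
    coeff_monomial_mul, coeff_W0D]
  simp only [D_le_iff, D_sub, D_apply0, D_apply1]
  rw [cN, csN]
  split_ifs with h
  · rw [Nat.cast_sub h.1, Nat.cast_sub h.2]
    push_cast
    ring
  · ring

lemma coeff_yeps_congr (f f' : R2) (e : Fin 2 →₀ ℕ)
    (h : ∀ e' : Fin 2 →₀ ℕ, e' 0 = e 0 →
      MvPowerSeries.coeff (R := ℂ) e' f = MvPowerSeries.coeff (R := ℂ) e' f') :
    MvPowerSeries.coeff (R := ℂ) e (YepsD lam₁ lam₂ ε f) =
      MvPowerSeries.coeff (R := ℂ) e (YepsD lam₁ lam₂ ε f') := by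
  rw [YepsD, YepsD]
  split_ifs with hm
  · rw [coeff_C_mul, coeff_C_mul, coeff_pd, coeff_pd, h _ (by simp)]
  · have e1 : MvPowerSeries.C (σ := Fin 2) (R := ℂ) lam₁ * MvPowerSeries.X 0 *
        MvPowerSeries.X 1 ^ ε.toNat =
        monomial (R := ℂ) (Finsupp.single 0 1 + Finsupp.single 1 ε.toNat) lam₁ := by
      rw [X_def, X_pow_eq, C_mul_mono, mul_one, monomial_mul_monomial, mul_one]
    have e2 : MvPowerSeries.C (σ := Fin 2) (R := ℂ) lam₂ * MvPowerSeries.X 1 ^ (ε.toNat + 1) =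
        monomial (R := ℂ) (Finsupp.single 1 (ε.toNat + 1)) lam₂ := by
      rw [X_pow_eq, C_mul_mono, mul_one]
    rw [e1, e2, map_add, map_add, coeff_mono_pd, coeff_mono_pd, coeff_mono_pd, coeff_mono_pd]
    congr 1
    · split_ifs with hc
      · rw [h _ ?_]
        have h0 : 1 ≤ e 0 := by
          have := (Finsupp.le_def.mp hc) 0
          simpa using this
        simp only [Finsupp.add_apply, Finsupp.tsub_apply, Finsupp.single_apply]
        norm_num
        omega
      · rfl
    · split_ifs with hc
      · rw [h _ ?_]
        simp only [Finsupp.add_apply, Finsupp.tsub_apply, Finsupp.single_apply]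
        norm_num
      · rfl

lemma coeff_R_support (hR : ∃ S : R2, R = uMon p q ^ (k + 1) * S) (x : Fin 2 →₀ ℕ)
    (hx : MvPowerSeries.coeff (R := ℂ) x R ≠ 0) : (k+1)*q ≤ x 0 := by
  obtain ⟨S, rfl⟩ := hR
  rw [uMon_pow, coeff_monomial_mul] at hx
  by_cases hc : Finsupp.single 0 ((k+1)*q) + Finsupp.single 1 ((k+1)*p) ≤ x
  · have := (Finsupp.le_def.mp hc) 0
    simpa using this
  · rw [if_neg hc] at hx; exact absurd rfl hx

lemma coeff_RYeps_congr (hR : ∃ S : R2, R = uMon p q ^ (k + 1) * S) (f f' : R2)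
    (d : Fin 2 →₀ ℕ)
    (h : ∀ e : Fin 2 →₀ ℕ, e 0 + (k+1)*q ≤ d 0 →
      MvPowerSeries.coeff (R := ℂ) e f = MvPowerSeries.coeff (R := ℂ) e f') :
    MvPowerSeries.coeff (R := ℂ) d (R * YepsD lam₁ lam₂ ε f) =
      MvPowerSeries.coeff (R := ℂ) d (R * YepsD lam₁ lam₂ ε f') := by
  classical
  rw [coeff_mul, coeff_mul]
  apply Finset.sum_congr rfl
  intro x hx
  by_cases hx1 : MvPowerSeries.coeff (R := ℂ) x.1 R = 0
  · rw [hx1, zero_mul, zero_mul]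
  · have h1 : (k+1)*q ≤ x.1 0 := coeff_R_support p q k R hR x.1 hx1
    have h2 : x.1 0 + x.2 0 = d 0 := by
      have := Finset.HasAntidiagonal.mem_antidiagonal.mp hx
      rw [← this, Finsupp.add_apply]
    rw [coeff_yeps_congr lam₁ lam₂ ε f f' x.2 (fun e' he' => h e' (by omega))]

lemma coeff_RYeps_zero (hR : ∃ S : R2, R = uMon p q ^ (k + 1) * S) (f : R2)
    (d : Fin 2 →₀ ℕ) (h : d 0 < (k+1)*q) :
    MvPowerSeries.coeff (R := ℂ) d (R * YepsD lam₁ lam₂ ε f) = 0 := by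
  classical
  rw [coeff_mul]
  apply Finset.sum_eq_zero
  intro x hx
  by_cases hx1 : MvPowerSeries.coeff (R := ℂ) x.1 R = 0
  · rw [hx1, zero_mul]
  · exfalso
    have h1 : (k+1)*q ≤ x.1 0 := coeff_R_support p q k R hR x.1 hx1
    have h2 : x.1 0 + x.2 0 = d 0 := by
      have := Finset.HasAntidiagonal.mem_antidiagonal.mp hx
      rw [← this, Finsupp.add_apply]
    omega

lemma cN_shift (hrel : (q : ℂ) * lam₁ = -(p : ℂ) * lam₂) (a b : ℕ) :
    cN lam₁ lam₂ ε (a + k*q) (b + k*p) = cN lam₁ lam₂ ε a b := by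
  rw [cN, cN]
  push_cast
  linear_combination (k : ℂ) * hrel

lemma cN_zero_iff' (hq : 0 < q) (hlam₂ : lam₂ ≠ 0)
    (hrel : (q : ℂ) * lam₁ = -(p : ℂ) * lam₂) (a b : ℕ) :
    cN lam₁ lam₂ ε a b = 0 ↔ (q : ℤ) * ((b : ℤ) + ε) = (p : ℤ) * a := by
  have hqC : (q : ℂ) ≠ 0 := Nat.cast_ne_zero.mpr hq.ne'
  constructor
  · intro h0
    have h2 : lam₂ * ((q : ℂ) * ((b : ℂ) + (ε : ℂ)) - (p : ℂ) * (a : ℂ)) = 0 := by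
      rw [cN] at h0
      linear_combination (q : ℂ) * h0 - (a : ℂ) * hrel
    have h3 := sub_eq_zero.mp ((mul_eq_zero.mp h2).resolve_left hlam₂)
    exact_mod_cast h3
  · intro h
    have hC : (q : ℂ) * ((b : ℂ) + (ε : ℂ)) = (p : ℂ) * (a : ℂ) := by exact_mod_cast h
    have h2 : (q : ℂ) * cN lam₁ lam₂ ε a b = 0 := by
      rw [cN]
      linear_combination lam₂ * hC + (a : ℂ) * hrel
    exact (mul_eq_zero.mp h2).resolve_left hqC

lemma cN_zero_iff (hq : 0 < q)
    (hpq : (0 < p ∧ 0 < q ∧ Nat.Coprime p q) ∨ (p = 0 ∧ q = 1))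
    (hlam₂ : lam₂ ≠ 0) (hrel : (q : ℂ) * lam₁ = -(p : ℂ) * lam₂) (a b : ℕ) :
    cN lam₁ lam₂ ε a b = 0 ↔ ∃ l : ℕ, (a : ℤ) = l * q ∧ (b : ℤ) + ε = l * p := by
  rw [cN_zero_iff' p q lam₁ lam₂ ε hq hlam₂ hrel]
  constructor
  · intro h
    rcases hpq with ⟨hp, hq', hco⟩ | ⟨hp0, hq1⟩
    · have hqa : (q : ℤ) ∣ (p : ℤ) * (a : ℤ) := ⟨(b : ℤ) + ε, h.symm⟩
      have hcoZ : IsCoprime (q : ℤ) (p : ℤ) :=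
        Int.isCoprime_iff_gcd_eq_one.mpr (by simpa [Int.gcd] using hco.symm)
      have hqa' : (q : ℤ) ∣ (a : ℤ) := hcoZ.dvd_of_dvd_mul_left hqa
      have hqaN : q ∣ a := Int.ofNat_dvd.mp hqa'
      refine ⟨a / q, ?_, ?_⟩
      · exact_mod_cast (Nat.div_mul_cancel hqaN).symm
      · have ha : (a : ℤ) = (a / q : ℕ) * q := by exact_mod_cast (Nat.div_mul_cancel hqaN).symm
        have h2 : (q : ℤ) * ((b : ℤ) + ε) = (q : ℤ) * ((a / q : ℕ) * p) := by
          rw [h, ha]; ring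
        exact mul_left_cancel₀ (by exact_mod_cast hq.ne' : (q : ℤ) ≠ 0) h2
    · subst hp0; subst hq1
      refine ⟨a, ?_, ?_⟩ <;> simp at h ⊢ <;> omega
  · rintro ⟨l, h1, h2⟩
    rw [h1, h2]; ring

lemma csN_shift (a b : ℕ) :
    csN p q k lam₁ lam₂ μ ε (a + k*q) (b + k*p) = (a : ℂ) + μ * cN lam₁ lam₂ ε a b := by
  rw [csN, cN, Nat.add_sub_cancel, Nat.add_sub_cancel]

lemma coeff_LOp_res_low (hq : 0 < q) (hk : 1 ≤ k) (hlam₂ : lam₂ ≠ 0)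
    (hrel : (q : ℂ) * lam₁ = -(p : ℂ) * lam₂)
    (hR : ∃ S : R2, R = uMon p q ^ (k + 1) * S)
    (a b l : ℕ) (hl : l ≤ k) (h1 : (a : ℤ) = l * q) (h2 : (b : ℤ) + ε = l * p)
    (F : R2) :
    MvPowerSeries.coeff (R := ℂ) (D a b) (LOp p q k lam₁ lam₂ μ ε R F) = 0 := by
  have haN : a = l * q := by exact_mod_cast h1
  have hc0 : cN lam₁ lam₂ ε a b = 0 := by
    rw [cN_zero_iff' p q lam₁ lam₂ ε hq hlam₂ hrel]
    rw [h1, h2]; ring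
  rw [coeff_LOp, hc0, zero_mul, zero_add,
    coeff_RYeps_zero p q k lam₁ lam₂ ε R hR F _ (by
      rw [D_apply0]
      have h3 : l * q ≤ k * q := Nat.mul_le_mul_right q hl
      have h4 : (k+1)*q = k*q + q := by ring
      omega), add_zero]
  split_ifs with h
  · have hkl : k ≤ l := by
      have := h.1
      rcases Nat.lt_or_ge l k with hlt | hge
      · exfalso
        have : l * q < k * q := (Nat.mul_lt_mul_right hq).mpr hlt
        omega
      · exact hge
    have hlk : l = k := le_antisymm hl hkl
    subst hlk
    have ha0 : a - l * q = 0 := by omega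
    have hb : ((b - l * p : ℕ) : ℂ) = -(ε : ℂ) := by
      have hlpZ : ((l * p : ℕ) : ℤ) = (l : ℤ) * p := by push_cast; ring
      have hbZ : ((b - l * p : ℕ) : ℤ) = -ε := by omega
      exact_mod_cast congrArg (fun z : ℤ => (z : ℂ)) hbZ
    rw [csN, ha0, hb]
    push_cast
    ring_nf
  · rfl

lemma coeff_LOp_res_high (hrel : (q : ℂ) * lam₁ = -(p : ℂ) * lam₂)
    (hq : 0 < q) (hlam₂ : lam₂ ≠ 0)
    (a b l : ℕ) (h1 : (a : ℤ) = l * q) (h2 : (b : ℤ) + ε = l * p) (F : R2) :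
    MvPowerSeries.coeff (R := ℂ) (D (a + k*q) (b + k*p)) (LOp p q k lam₁ lam₂ μ ε R F) =
      (a : ℂ) * MvPowerSeries.coeff (R := ℂ) (D a b) F +
        MvPowerSeries.coeff (R := ℂ) (D (a + k*q) (b + k*p)) (R * YepsD lam₁ lam₂ ε F) := by
  have hc0 : cN lam₁ lam₂ ε a b = 0 := by
    rw [cN_zero_iff' p q lam₁ lam₂ ε hq hlam₂ hrel]
    rw [h1, h2]; ring
  rw [coeff_LOp, cN_shift p q k lam₁ lam₂ ε hrel, hc0, zero_mul, zero_add,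
    if_pos ⟨Nat.le_add_left _ _, Nat.le_add_left _ _⟩, Nat.add_sub_cancel,
    Nat.add_sub_cancel, csN_shift p q k lam₁ lam₂ μ ε, hc0, mul_zero, add_zero]

variable (G : R2)

def newrow (c₀ : ℂ) (a : ℕ) (P : R2) (b : ℕ) : ℂ :=
  if cN lam₁ lam₂ ε a b ≠ 0 then
    (MvPowerSeries.coeff (R := ℂ) (D a b) G -
      (if k*q ≤ a ∧ k*p ≤ b then
        csN p q k lam₁ lam₂ μ ε a b * MvPowerSeries.coeff (R := ℂ) (D (a-k*q) (b-k*p)) P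
      else 0) -
      MvPowerSeries.coeff (R := ℂ) (D a b) (R * YepsD lam₁ lam₂ ε P)) / cN lam₁ lam₂ ε a b
  else if a = 0 then c₀
  else (MvPowerSeries.coeff (R := ℂ) (D (a+k*q) (b+k*p)) G -
      MvPowerSeries.coeff (R := ℂ) (D (a+k*q) (b+k*p)) (R * YepsD lam₁ lam₂ ε P)) / (a : ℂ)

def rowsF (c₀ : ℂ) : ℕ → R2
  | 0 => 0
  | (a+1) => fun e =>
      if e 0 = a then newrow p q k lam₁ lam₂ μ ε R G c₀ a (rowsF c₀ a) (e 1)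
      else rowsF c₀ a e

def solF (c₀ : ℂ) : R2 :=
  fun e => newrow p q k lam₁ lam₂ μ ε R G c₀ (e 0) (rowsF p q k lam₁ lam₂ μ ε R G c₀ (e 0)) (e 1)

lemma coeff_solF (c₀ : ℂ) (a b : ℕ) :
    MvPowerSeries.coeff (R := ℂ) (D a b) (solF p q k lam₁ lam₂ μ ε R G c₀) =
      newrow p q k lam₁ lam₂ μ ε R G c₀ a (rowsF p q k lam₁ lam₂ μ ε R G c₀ a) b := by
  rw [MvPowerSeries.coeff_apply, solF, D_apply0, D_apply1]

lemma rowsF_eq (c₀ : ℂ) (a : ℕ) (e : Fin 2 →₀ ℕ) (h : e 0 < a) :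
    MvPowerSeries.coeff (R := ℂ) e (rowsF p q k lam₁ lam₂ μ ε R G c₀ a) =
      MvPowerSeries.coeff (R := ℂ) e (solF p q k lam₁ lam₂ μ ε R G c₀) := by
  induction a with
  | zero => omega
  | succ a ih =>
    rw [MvPowerSeries.coeff_apply, rowsF]
    beta_reduce
    by_cases he : e 0 = a
    · rw [if_pos he, MvPowerSeries.coeff_apply, solF, he]
    · rw [if_neg he]
      exact ih (by omega)

theorem solves (hq : 0 < q) (hk : 1 ≤ k)
    (hpq : (0 < p ∧ 0 < q ∧ Nat.Coprime p q) ∨ (p = 0 ∧ q = 1))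
    (hlam₂ : lam₂ ≠ 0) (hrel : (q : ℂ) * lam₁ = -(p : ℂ) * lam₂)
    (hε : ε = -1 ∨ ε = 0 ∨ ε = 1)
    (hR : ∃ S : R2, R = uMon p q ^ (k + 1) * S)
    (hG : ∀ a b : ℕ, (∃ l : ℕ, l ≤ k ∧ (a : ℤ) = l * q ∧ (b : ℤ) + ε = l * p) →
      MvPowerSeries.coeff (R := ℂ) (D a b) G = 0)
    (c₀ : ℂ) :
    LOp p q k lam₁ lam₂ μ ε R (solF p q k lam₁ lam₂ μ ε R G c₀) = G := by
  have hkq1 : 1 ≤ k * q := Nat.one_le_iff_ne_zero.mpr (by positivity)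
  have hkq2 : (k+1) * q = k*q + q := by ring
  apply MvPowerSeries.ext
  intro d
  obtain ⟨a, b, rfl⟩ : ∃ a b : ℕ, d = D a b := ⟨d 0, d 1, fin2_eq_D d⟩
  by_cases hc : cN lam₁ lam₂ ε a b = 0
  · obtain ⟨l, h1, h2⟩ := (cN_zero_iff p q lam₁ lam₂ ε hq hpq hlam₂ hrel a b).mp hc
    by_cases hlk : l ≤ k
    · rw [coeff_LOp_res_low p q k lam₁ lam₂ μ ε R hq hk hlam₂ hrel hR a b l hlk h1 h2]
      exact (hG a b ⟨l, hlk, h1, h2⟩).symm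
    · push_neg at hlk
      have haN : a = l * q := by exact_mod_cast h1
      have hε1 : ε ≤ 1 := by rcases hε with h|h|h <;> omega
      have h2Z : (b : ℤ) + ε = ((l*p : ℕ) : ℤ) := by rw [h2]; push_cast; ring
      have hbk : k * p ≤ b := by
        rcases Nat.eq_zero_or_pos p with hp0 | hp
        · simp [hp0]
        · have hlp : (k+1) * p ≤ l * p := Nat.mul_le_mul_right p (by omega)
          have hkp1 : (k+1) * p = k*p + p := by ring
          omega
      have hak : k * q ≤ a := by
        have := Nat.mul_le_mul_right q (le_of_lt hlk); omega
      have hfacq : (l-k)*q + k*q = l*q := by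
        rw [← Nat.add_mul, Nat.sub_add_cancel hlk.le]
      have hfacp : (l-k)*p + k*p = l*p := by
        rw [← Nat.add_mul, Nat.sub_add_cancel hlk.le]
      have hD : D ((a - k*q) + k*q) ((b - k*p) + k*p) = D a b :=
        D_ext _ _ _ _ (by omega) (by omega)
      have h1' : ((a - k*q : ℕ) : ℤ) = ((l-k : ℕ) : ℤ) * q := by
        have hc1 : (((l-k)*q : ℕ) : ℤ) = ((l-k : ℕ) : ℤ) * (q : ℤ) := by push_cast; ring
        rw [← hc1]; omega
      have h2' : ((b - k*p : ℕ) : ℤ) + ε = ((l-k : ℕ) : ℤ) * p := by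
        have hc2 : (((l-k)*p : ℕ) : ℤ) = ((l-k : ℕ) : ℤ) * (p : ℤ) := by push_cast; ring
        rw [← hc2]; omega
      rw [← hD, coeff_LOp_res_high p q k lam₁ lam₂ μ ε R hrel hq hlam₂ _ _ (l-k) h1' h2',
        coeff_solF]
      have hca' : cN lam₁ lam₂ ε (a - k*q) (b - k*p) = 0 := by
        rw [cN_zero_iff' p q lam₁ lam₂ ε hq hlam₂ hrel, h1', h2']; ring
      have ha'0 : a - k*q ≠ 0 := by
        have h5 : 1*1 ≤ (l-k)*q := Nat.mul_le_mul (by omega) hq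
        omega
      rw [newrow, if_neg (not_not_intro hca'), if_neg ha'0, hD]
      have hRT : MvPowerSeries.coeff (R := ℂ) (D a b)
            (R * YepsD lam₁ lam₂ ε (rowsF p q k lam₁ lam₂ μ ε R G c₀ (a - k*q))) =
          MvPowerSeries.coeff (R := ℂ) (D a b)
            (R * YepsD lam₁ lam₂ ε (solF p q k lam₁ lam₂ μ ε R G c₀)) := by
        apply coeff_RYeps_congr p q k lam₁ lam₂ ε R hR
        intro e he
        rw [D_apply0] at he
        exact rowsF_eq p q k lam₁ lam₂ μ ε R G c₀ _ e (by omega)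
      rw [hRT]
      have hne : ((a - k*q : ℕ) : ℂ) ≠ 0 := Nat.cast_ne_zero.mpr ha'0
      have hne2 : ((a:ℂ) - (k:ℂ)*(q:ℂ)) ≠ 0 := by
        have hcast : ((a - k*q : ℕ) : ℂ) = (a:ℂ) - (k:ℂ)*(q:ℂ) := by push_cast [hak]; ring
        rw [← hcast]; exact hne
      field_simp
      ring
  · rw [coeff_LOp, coeff_solF, newrow, if_pos hc]
    have hRT : MvPowerSeries.coeff (R := ℂ) (D a b)
          (R * YepsD lam₁ lam₂ ε (rowsF p q k lam₁ lam₂ μ ε R G c₀ a)) =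
        MvPowerSeries.coeff (R := ℂ) (D a b)
          (R * YepsD lam₁ lam₂ ε (solF p q k lam₁ lam₂ μ ε R G c₀)) := by
      apply coeff_RYeps_congr p q k lam₁ lam₂ ε R hR
      intro e he
      rw [D_apply0] at he
      exact rowsF_eq p q k lam₁ lam₂ μ ε R G c₀ _ e (by omega)
    rw [hRT]
    by_cases hsh : k*q ≤ a ∧ k*p ≤ b
    · rw [if_pos hsh, if_pos hsh,
        rowsF_eq p q k lam₁ lam₂ μ ε R G c₀ _ _ (by rw [D_apply0]; omega)]
      field_simp
      ring
    · rw [if_neg hsh, if_neg hsh]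
      field_simp
      ring

lemma solF_free (hε0 : ε ≤ 0) (c₀ : ℂ) :
    MvPowerSeries.coeff (R := ℂ) (D 0 ((-ε).toNat)) (solF p q k lam₁ lam₂ μ ε R G c₀) = c₀ := by
  rw [coeff_solF, newrow]
  have hc : cN lam₁ lam₂ ε 0 ((-ε).toNat) = 0 := by
    rw [cN]
    have h1 : (((-ε).toNat : ℕ) : ℂ) = -(ε : ℂ) := by
      have h2 : (((-ε).toNat : ℕ) : ℤ) = -ε := Int.toNat_of_nonneg (by omega)
      exact_mod_cast congrArg (Int.cast : ℤ → ℂ) h2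
    rw [h1]
    push_cast
    ring
  rw [if_neg (not_not_intro hc), if_pos rfl]

theorem unique_aux (hq : 0 < q) (hk : 1 ≤ k)
    (hpq : (0 < p ∧ 0 < q ∧ Nat.Coprime p q) ∨ (p = 0 ∧ q = 1))
    (hlam₂ : lam₂ ≠ 0) (hrel : (q : ℂ) * lam₁ = -(p : ℂ) * lam₂)
    (hR : ∃ S : R2, R = uMon p q ^ (k + 1) * S)
    (F F' : R2) (hF : LOp p q k lam₁ lam₂ μ ε R F = G)
    (hF' : LOp p q k lam₁ lam₂ μ ε R F' = G)
    (hcoef : MvPowerSeries.coeff (R := ℂ) (D 0 ((-ε).toNat)) F =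
      MvPowerSeries.coeff (R := ℂ) (D 0 ((-ε).toNat)) F') : F = F' := by
  have hkq1 : 1 ≤ k * q := Nat.one_le_iff_ne_zero.mpr (by positivity)
  have hkq2 : (k+1) * q = k*q + q := by ring
  suffices H : ∀ a b : ℕ, MvPowerSeries.coeff (R := ℂ) (D a b) F = MvPowerSeries.coeff (R := ℂ) (D a b) F' by
    apply MvPowerSeries.ext; intro d; rw [fin2_eq_D d]; exact H _ _
  intro a
  induction a using Nat.strong_induction_on with
  | _ a ih =>
  intro b
  have ih' : ∀ e : Fin 2 →₀ ℕ, e 0 < a →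
      MvPowerSeries.coeff (R := ℂ) e F = MvPowerSeries.coeff (R := ℂ) e F' := by
    intro e he; rw [fin2_eq_D e]; exact ih (e 0) he (e 1)
  by_cases hc : cN lam₁ lam₂ ε a b = 0
  · obtain ⟨l, h1, h2⟩ := (cN_zero_iff p q lam₁ lam₂ ε hq hpq hlam₂ hrel a b).mp hc
    by_cases hl0 : l = 0
    · subst hl0
      have ha0 : a = 0 := by
        have : (a : ℤ) = 0 := by simpa using h1
        exact_mod_cast this
      have hb : b = (-ε).toNat := by
        have h3 : (b : ℤ) + ε = 0 := by simpa using h2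
        omega
      rw [ha0, hb]; exact hcoef
    · have hl1 : 1 ≤ l := Nat.one_le_iff_ne_zero.mpr hl0
      have e1 := coeff_LOp_res_high p q k lam₁ lam₂ μ ε R hrel hq hlam₂ a b l h1 h2 F
      have e2 := coeff_LOp_res_high p q k lam₁ lam₂ μ ε R hrel hq hlam₂ a b l h1 h2 F'
      rw [hF] at e1; rw [hF'] at e2
      have hRT : MvPowerSeries.coeff (R := ℂ) (D (a+k*q) (b+k*p)) (R * YepsD lam₁ lam₂ ε F) =
          MvPowerSeries.coeff (R := ℂ) (D (a+k*q) (b+k*p)) (R * YepsD lam₁ lam₂ ε F') := by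
        apply coeff_RYeps_congr p q k lam₁ lam₂ ε R hR
        intro e he
        rw [D_apply0] at he
        exact ih' e (by omega)
      rw [hRT] at e1
      have h3 := e1.symm.trans e2
      have ha0 : a ≠ 0 := by
        have h5 : 1*1 ≤ l*q := Nat.mul_le_mul hl1 hq
        have haN : a = l * q := by exact_mod_cast h1
        omega
      exact mul_left_cancel₀ (Nat.cast_ne_zero.mpr ha0) (add_right_cancel h3)
  · have e1 := coeff_LOp p q k lam₁ lam₂ μ ε R F a b
    have e2 := coeff_LOp p q k lam₁ lam₂ μ ε R F' a b
    rw [hF] at e1; rw [hF'] at e2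
    have hsh : (if k*q ≤ a ∧ k*p ≤ b then
          csN p q k lam₁ lam₂ μ ε a b * MvPowerSeries.coeff (R := ℂ) (D (a-k*q) (b-k*p)) F
        else 0) =
        (if k*q ≤ a ∧ k*p ≤ b then
          csN p q k lam₁ lam₂ μ ε a b * MvPowerSeries.coeff (R := ℂ) (D (a-k*q) (b-k*p)) F'
        else 0) := by
      split_ifs with h
      · rw [ih' _ (by rw [D_apply0]; omega)]
      · rfl
    have hRT : MvPowerSeries.coeff (R := ℂ) (D a b) (R * YepsD lam₁ lam₂ ε F) =
        MvPowerSeries.coeff (R := ℂ) (D a b) (R * YepsD lam₁ lam₂ ε F') := by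
      apply coeff_RYeps_congr p q k lam₁ lam₂ ε R hR
      intro e he
      rw [D_apply0] at he
      exact ih' e (by omega)
    rw [hsh, hRT] at e1
    have h3 := e1.symm.trans e2
    exact mul_left_cancel₀ hc (add_right_cancel (add_right_cancel h3))

end Main
end St19

theorem stmt19 (p q k : ℕ) (hk : 1 ≤ k)
    (hpq : (0 < p ∧ 0 < q ∧ Nat.Coprime p q) ∨ (p = 0 ∧ q = 1))
    (lam₁ lam₂ μ : ℂ) (hlam₂ : lam₂ ≠ 0)
    -- λ₁/λ₂ = −p/q :
    (hrel : (q : ℂ) * lam₁ = -(p : ℂ) * lam₂)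
    (ε : ℤ) (hε : ε = -1 ∨ ε = 0 ∨ ε = 1)
    (hε' : ε = -1 → p = 0 ∧ lam₁ = 0)
    (R : R2)
    -- R is divisible by u^{k+1} :
    (hR : ∃ S : R2, R = uMon p q ^ (k + 1) * S)
    (G : R2) :
    -- solvability of  X·F + ελ₂(1+μu^k)F = G :
    ((∃ F : R2,
        X0D lam₁ lam₂ μ p q k F + R * YepsD lam₁ lam₂ ε F +
          MvPowerSeries.C (σ := Fin 2) (R := ℂ) ((ε : ℂ) * lam₂) *
            ((1 + MvPowerSeries.C (σ := Fin 2) (R := ℂ) μ * uMon p q ^ k) * F) = G) ↔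
      -- iff G contains no monomial y^{−ε}uⁿ, 0 ≤ n ≤ k :
      (∀ a b : ℕ, (∃ l : ℕ, l ≤ k ∧ (a : ℤ) = l * q ∧ (b : ℤ) + ε = l * p) →
        MvPowerSeries.coeff (R := ℂ) (Finsupp.single 0 a + Finsupp.single 1 b) G = 0)) ∧
    -- if ε ≤ 0, the coefficient of y^{−ε} in F is free and F is unique up to it :
    (ε ≤ 0 →
      (∃ F : R2,
        X0D lam₁ lam₂ μ p q k F + R * YepsD lam₁ lam₂ ε F +
          MvPowerSeries.C (σ := Fin 2) (R := ℂ) ((ε : ℂ) * lam₂) *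
            ((1 + MvPowerSeries.C (σ := Fin 2) (R := ℂ) μ * uMon p q ^ k) * F) = G) →
      ∀ c : ℂ, ∃! F : R2,
        (X0D lam₁ lam₂ μ p q k F + R * YepsD lam₁ lam₂ ε F +
          MvPowerSeries.C (σ := Fin 2) (R := ℂ) ((ε : ℂ) * lam₂) *
            ((1 + MvPowerSeries.C (σ := Fin 2) (R := ℂ) μ * uMon p q ^ k) * F) = G) ∧
        MvPowerSeries.coeff (R := ℂ) (Finsupp.single 1 (-ε).toNat) F = c) := by
  have hq : 0 < q := by rcases hpq with ⟨_, h, _⟩ | ⟨_, h⟩ <;> omega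
  have hLdef : ∀ F : R2,
      X0D lam₁ lam₂ μ p q k F + R * YepsD lam₁ lam₂ ε F +
        MvPowerSeries.C (σ := Fin 2) (R := ℂ) ((ε : ℂ) * lam₂) *
          ((1 + MvPowerSeries.C (σ := Fin 2) (R := ℂ) μ * uMon p q ^ k) * F) =
      St19.LOp p q k lam₁ lam₂ μ ε R F := fun _ => rfl
  have hDdef : ∀ a b : ℕ,
      (Finsupp.single (0 : Fin 2) a + Finsupp.single 1 b) = St19.D a b := fun _ _ => rfl
  have hsolve_to_obs : (∃ F : R2, St19.LOp p q k lam₁ lam₂ μ ε R F = G) →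
      ∀ a b : ℕ, (∃ l : ℕ, l ≤ k ∧ (a : ℤ) = l * q ∧ (b : ℤ) + ε = l * p) →
        MvPowerSeries.coeff (R := ℂ) (St19.D a b) G = 0 := by
    rintro ⟨F, hF⟩ a b ⟨l, hl, h1, h2⟩
    have h0 := St19.coeff_LOp_res_low p q k lam₁ lam₂ μ ε R hq hk hlam₂ hrel hR a b l hl h1 h2 F
    rw [hF] at h0
    exact h0
  constructor
  · constructor
    · intro hEx
      simp only [hLdef] at hEx
      simp only [hDdef]
      exact hsolve_to_obs hEx
    · intro hG
      refine ⟨St19.solF p q k lam₁ lam₂ μ ε R G 0, ?_⟩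
      rw [hLdef]
      exact St19.solves p q k lam₁ lam₂ μ ε R G hq hk hpq hlam₂ hrel hε hR
        (by simpa only [hDdef] using hG) 0
  · intro hε0 hsolv c
    have hG : ∀ a b : ℕ, (∃ l : ℕ, l ≤ k ∧ (a : ℤ) = l * q ∧ (b : ℤ) + ε = l * p) →
        MvPowerSeries.coeff (R := ℂ) (St19.D a b) G = 0 := by
      apply hsolve_to_obs
      obtain ⟨F, hF⟩ := hsolv
      exact ⟨F, by rw [← hLdef]; exact hF⟩
    have hsingle : (Finsupp.single (1 : Fin 2) (-ε).toNat) = St19.D 0 ((-ε).toNat) :=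
      St19.single1_eq_D _
    refine ⟨St19.solF p q k lam₁ lam₂ μ ε R G c, ⟨?_, ?_⟩, ?_⟩
    · rw [hLdef]
      exact St19.solves p q k lam₁ lam₂ μ ε R G hq hk hpq hlam₂ hrel hε hR hG c
    · rw [hsingle]
      exact St19.solF_free p q k lam₁ lam₂ μ ε R G hε0 c
    · rintro F' ⟨hF', hc'⟩
      apply St19.unique_aux p q k lam₁ lam₂ μ ε R G hq hk hpq hlam₂ hrel hR
      · rw [← hLdef]; exact hF'
      · rw [hLdef] at *
        exact St19.solves p q k lam₁ lam₂ μ ε R G hq hk hpq hlam₂ hrel hε hR hG c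
      · rw [← hsingle, hc']
        rw [hsingle]
        exact (St19.solF_free p q k lam₁ lam₂ μ ε R G hε0 c).symm
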